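/- Let n be a positive integer and p a prime with n/2 < p ≤ n. Then for every integer j with 0 ≤ j ≤ n, the binomial coefficient C(n,j) is divisible by p if and only if n-p+1 ≤ j ≤ p-1. -/
import Mathlib

/-- For a positive integer `n` and a prime `p` with `n/2 < p ≤ n`, and any
`0 ≤ j ≤ n`, the binomial coefficient `C(n,j)` is divisible by `p` if and only
if `n - p + 1 ≤ j ≤ p - 1`. -/
theorem prime_dvd_choose_iff (n p : ℕ) (hn : 0 < n) (hp : p.Prime)
    (h1 : n < 2 * p) (h2 : p ≤ n) (j : ℕ) (hj : j ≤ n) :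
    p ∣ n.choose j ↔ n - p + 1 ≤ j ∧ j ≤ p - 1 := by
  have hp2 := hp.two_le
  have hnp2 : ¬ p ^ 2 ∣ Nat.factorial n := by
    rw [Nat.Prime.pow_dvd_factorial_iff hp (b := 2)
        ((Nat.log_lt_of_lt_pow (by omega)) (by nlinarith))]
    have : n / p = 1 := by
      exact Nat.div_eq_of_lt_le (by omega) (by omega)
    simp [this]
  constructor
  · rintro hdvd
    have key : n.choose j * (Nat.factorial j * Nat.factorial (n - j)) = Nat.factorial n := by
      rw [← Nat.choose_mul_factorial_mul_factorial hj]; ring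
    constructor
    · by_contra h
      have hpj : p ∣ Nat.factorial (n - j) := hp.dvd_factorial.2 (by omega)
      apply hnp2
      rw [← key, pow_two]
      exact mul_dvd_mul hdvd (Dvd.dvd.mul_left hpj _)
    · by_contra h
      have hpj : p ∣ Nat.factorial j := hp.dvd_factorial.2 (by omega)
      apply hnp2
      rw [← key, pow_two]
      exact mul_dvd_mul hdvd (Dvd.dvd.mul_right hpj _)
  · rintro ⟨ha, hb⟩
    exact Nat.Prime.dvd_choose hp (by omega) (by omega) h2
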